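/- Let a = (a1, a2, a3, a4) ∈ ℝ⁴ with a2 - a1 = a4 - a3 = Δa > 0, and suppose the four components of a are pairwise distinct. For each positive integer m, let P_m(c) be the monic degree-4 polynomial m⁻⁸·det M_m(a,c) (in the variable c). Then P_m converges coefficientwise, as m → ∞, to the polynomial P(c) = (a1-c)(a2-c)(a3-c)(a4-c), which has four simple real roots. -/

import Mathlib

open Polynomial Filter Topology

private lemma my_det_fin_four {R : Type*} [CommRing R] (A : Matrix (Fin 4) (Fin 4) R) :
    A.det = A 0 0*A 1 1*A 2 2*A 3 3 - A 0 0*A 1 1*A 2 3*A 3 2 - A 0 0*A 1 2*A 2 1*A 3 3 + A 0 0*A 1 2*A 2 3*A 3 1 + A 0 0*A 1 3*A 2 1*A 3 2 - A 0 0*A 1 3*A 2 2*A 3 1 - A 0 1*A 1 0*A 2 2*A 3 3 + A 0 1*A 1 0*A 2 3*A 3 2 + A 0 1*A 1 2*A 2 0*A 3 3 - A 0 1*A 1 2*A 2 3*A 3 0 - A 0 1*A 1 3*A 2 0*A 3 2 + A 0 1*A 1 3*A 2 2*A 3 0 + A 0 2*A 1 0*A 2 1*A 3 3 - A 0 2*A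 1 0*A 2 3*A 3 1 - A 0 2*A 1 1*A 2 0*A 3 3 + A 0 2*A 1 1*A 2 3*A 3 0 + A 0 2*A 1 3*A 2 0*A 3 1 - A 0 2*A 1 3*A 2 1*A 3 0 - A 0 3*A 1 0*A 2 1*A 3 2 + A 0 3*A 1 0*A 2 2*A 3 1 + A 0 3*A 1 1*A 2 0*A 3 2 - A 0 3*A 1 1*A 2 2*A 3 0 - A 0 3*A 1 2*A 2 0*A 3 1 + A 0 3*A 1 2*A 2 1*A 3 0 := by
  rw [Matrix.det_succ_row_zero]
  simp only [Fin.sum_univ_succ, Fin.sum_univ_zero, Matrix.det_fin_three, Matrix.submatrix_apply,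
    Fin.succAbove, Fin.lt_def, Fin.val_zero, Fin.val_succ, Fin.succ_zero_eq_one]
  norm_num
  have e2 : ∀ (h : 2 < 4), (⟨2, h⟩ : Fin 4) = 2 := fun _ => rfl
  have e3 : ∀ (h : 3 < 4), (⟨3, h⟩ : Fin 4) = 3 := fun _ => rfl
  have ec : (Fin.castSucc 2 : Fin 4) = 2 := rfl
  have es : (Fin.succ 2 : Fin 4) = 3 := rfl
  simp only [e2, e3, ec, es]
  ring

set_option maxHeartbeats 2000000 in
theorem stmt_8 (a1 a2 a3 a4 : ℝ) (heq : a2 - a1 = a4 - a3) (hpos : 0 < a2 - a1)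
    (hd12 : a1 ≠ a2) (hd13 : a1 ≠ a3) (hd14 : a1 ≠ a4)
    (hd23 : a2 ≠ a3) (hd24 : a2 ≠ a4) (hd34 : a3 ≠ a4) :
    let M : ℕ → Matrix (Fin 4) (Fin 4) (Polynomial ℝ) := fun m =>
      !![C ((m : ℝ)^2) * (C a1 - X) - 1, 1, 1, -1;
         -1, C ((m : ℝ)^2) * (C a2 - X) + 1, 1, -1;
         1, -1, C ((m : ℝ)^2) * (C a3 - X) - 1, 1;
         1, -1, -1, C ((m : ℝ)^2) * (C a4 - X) + 1]
    let Pm : ℕ → Polynomial ℝ := fun m => C (((m : ℝ)^8)⁻¹) * (M m).det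
    let P : Polynomial ℝ := (C a1 - X) * (C a2 - X) * (C a3 - X) * (C a4 - X)
    (∀ k : ℕ, Tendsto (fun m : ℕ => (Pm m).coeff k) atTop (𝓝 (P.coeff k))) ∧
    P.roots = {a1, a2, a3, a4} ∧
    Multiset.card P.roots = 4 ∧ P.roots.toFinset.card = 4 := by
  intro M Pm P
  set R3 : Polynomial ℝ :=
      - (C a2 - X) * (C a3 - X) * (C a4 - X) + (C a1 - X) * (C a3 - X) * (C a4 - X)
      - (C a1 - X) * (C a2 - X) * (C a4 - X) + (C a1 - X) * (C a2 - X) * (C a3 - X)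
    with hR3
  have hdet : ∀ m : ℕ, (M m).det = C ((m : ℝ)^8) * P + C ((m : ℝ)^6) * R3 := by
    intro m
    have h8 : ((m : ℝ)^8) = ((m:ℝ)^2)^4 := by ring
    have h6 : ((m : ℝ)^6) = ((m:ℝ)^2)^3 := by ring
    rw [show M m = !![C ((m : ℝ)^2) * (C a1 - X) - 1, 1, 1, -1;
         -1, C ((m : ℝ)^2) * (C a2 - X) + 1, 1, -1;
         1, -1, C ((m : ℝ)^2) * (C a3 - X) - 1, 1;
         1, -1, -1, C ((m : ℝ)^2) * (C a4 - X) + 1] from rfl, my_det_fin_four]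
    rw [h8, h6, hR3]
    simp only [map_pow, P, Matrix.of_apply, Matrix.cons_val', Matrix.cons_val_zero, Matrix.cons_val_one,
      Matrix.head_cons, Matrix.cons_val_fin_one, Matrix.empty_val', Matrix.head_fin_const,
      Matrix.cons_val_two, Matrix.cons_val_three, Matrix.tail_cons]
    ring
  have hPm : ∀ m : ℕ, 1 ≤ m → Pm m = P + C (((m : ℝ)^2)⁻¹) * R3 := by
    intro m hm
    have hm0 : (m : ℝ) ≠ 0 := Nat.cast_ne_zero.mpr (by omega)
    have h1 : ((m:ℝ)^8)⁻¹ * (m:ℝ)^8 = 1 := inv_mul_cancel₀ (by positivity)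
    have h2 : ((m:ℝ)^8)⁻¹ * (m:ℝ)^6 = ((m:ℝ)^2)⁻¹ := by
      field_simp
    simp only [Pm, hdet m, mul_add, ← mul_assoc, ← C_mul, h1, h2, map_one, one_mul]
  constructor
  · intro k
    have hlim : Tendsto (fun m : ℕ => P.coeff k + ((m : ℝ)^2)⁻¹ * R3.coeff k) atTop
        (𝓝 (P.coeff k)) := by
      have h1 : Tendsto (fun m : ℕ => ((m : ℝ)^2)⁻¹) atTop (𝓝 0) := by
        apply Tendsto.inv_tendsto_atTop
        exact (tendsto_pow_atTop two_ne_zero).comp tendsto_natCast_atTop_atTop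
      have := (tendsto_const_nhds (x := P.coeff k) (f := atTop (α := ℕ))).add
        (h1.mul_const (R3.coeff k))
      simpa using this
    refine hlim.congr' ?_
    filter_upwards [eventually_ge_atTop 1] with m hm
    rw [hPm m hm]
    simp [coeff_C_mul]
  · have hP : P = (X - C a1) * ((X - C a2) * ((X - C a3) * (X - C a4))) := by
      simp only [P]; ring
    have hroots : P.roots = {a1, a2, a3, a4} := by
      rw [hP, roots_mul (mul_ne_zero (X_sub_C_ne_zero a1) (mul_ne_zero (X_sub_C_ne_zero a2)
          (mul_ne_zero (X_sub_C_ne_zero a3) (X_sub_C_ne_zero a4)))),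
        roots_mul (mul_ne_zero (X_sub_C_ne_zero a2)
          (mul_ne_zero (X_sub_C_ne_zero a3) (X_sub_C_ne_zero a4))),
        roots_mul (mul_ne_zero (X_sub_C_ne_zero a3) (X_sub_C_ne_zero a4)),
        roots_X_sub_C, roots_X_sub_C, roots_X_sub_C, roots_X_sub_C]
      rfl
    refine ⟨hroots, ?_, ?_⟩
    · rw [hroots]; rfl
    · rw [hroots]
      simp [Finset.card_insert_of_notMem, hd12, hd13, hd14, hd23, hd24, hd34]
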